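/- Assume LICQ and let κ be a GLC. Let (x_k)_{k≥0} be a sequence in ℝ^{n_x} with x₀ ≠ 0 satisfying ‖x_k‖ ≤ c‖x₀‖β^k for all k ≥ 0, where c > 0 and β ∈ (0,1). For k ≥ 1 define D_k = {j : B(z*(x_{k−1}), κ‖x_k − x_{k−1}‖) ⊆ Z_j(x_k)} and I(x_k) = A(x_{k−1}) ∪ ({1,…,n_c} \ D_k). Fix i ∈ {1,…,n_c} with 0 < σ_i < ∞ and set K_i = ⌈log_β (σ_i / (c‖x₀‖(1 + β⁻¹)√(1+κ²)))⌉. Then for every k ≥ max(K_i, 1), the cardinality of I(x_k) is at most n_z + i. -/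

import Mathlib

set_option maxHeartbeats 1000000

lemma ncard_iInter_ge_aux {α : Type*} [Fintype α] (S : ℕ → Set α)
    (hanti : ∀ m n, m ≤ n → S n ⊆ S m) (m : ℕ) (h : ∀ n, m ≤ (S n).ncard) :
    m ≤ (⋂ n, S n).ncard := by
  obtain ⟨N, hN⟩ : ∃ N, (S N).ncard = sInf (Set.range fun n => (S n).ncard) :=
    Nat.sInf_mem (Set.range_nonempty _)
  have hmin : ∀ n, (S N).ncard ≤ (S n).ncard := fun n => hN ▸ Nat.sInf_le ⟨n, rfl⟩
  have hconst : ∀ n, N ≤ n → S n = S N := fun n hn =>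
    Set.eq_of_subset_of_ncard_le (hanti N n hn) (hmin n) (Set.toFinite _)
  have hsub : S N ⊆ ⋂ n, S n := by
    refine Set.subset_iInter fun n => ?_
    rcases le_total N n with hn | hn
    · rw [hconst n hn]
    · exact hanti n N hn
  exact (h N).trans (Set.ncard_le_ncard hsub (Set.toFinite _))

/-- Theorem 4(a): along an exponentially decaying state sequence, for all
`k ≥ max(K_i, 1)` the adaptive trimming index set `I(x_k)` has at most `n_z + i`
elements. -/
theorem adaptive_trimming_card_le
    (n_x n_z n_c : ℕ) (hnx : 0 < n_x) (hnz : 0 < n_z) (hnc : 0 < n_c)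
    (H : Matrix (Fin n_z) (Fin n_z) ℝ) (hH : H.PosDef)
    (F : Matrix (Fin n_x) (Fin n_z) ℝ)
    (G : Matrix (Fin n_c) (Fin n_z) ℝ)
    (S : Matrix (Fin n_c) (Fin n_x) ℝ)
    (w : Fin n_c → ℝ)
    (V : EuclideanSpace ℝ (Fin n_x) → EuclideanSpace ℝ (Fin n_z) → ℝ)
    (hV : ∀ x z, V x z = (1 / 2) * dotProduct z (H.mulVec z)
      + dotProduct x (F.mulVec z))
    (Z : EuclideanSpace ℝ (Fin n_x) → Set (Fin n_c) → Set (EuclideanSpace ℝ (Fin n_z)))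
    (hZ : ∀ x I, Z x I =
      {z : EuclideanSpace ℝ (Fin n_z) | ∀ j ∈ I, dotProduct (G j) z ≤ dotProduct (S j) x + w j})
    (hfeas : ∀ x, (Z x Set.univ).Nonempty)
    (zstar : EuclideanSpace ℝ (Fin n_x) → Set (Fin n_c) → EuclideanSpace ℝ (Fin n_z))
    (hmem : ∀ x I, zstar x I ∈ Z x I)
    (hopt : ∀ x I, ∀ z ∈ Z x I, V x (zstar x I) ≤ V x z)
    (huniq : ∀ x I, ∀ z ∈ Z x I, (∀ z' ∈ Z x I, V x z ≤ V x z') → z = zstar x I)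
    (hLICQ : ∀ x : EuclideanSpace ℝ (Fin n_x), LinearIndependent ℝ
      (fun j : {j : Fin n_c // dotProduct (G j) (zstar x Set.univ)
        = dotProduct (S j) x + w j} => G j.1))
    (κ : ℝ) (hκ0 : 0 ≤ κ)
    (hGLC : ∀ (x₁ x₂ : EuclideanSpace ℝ (Fin n_x)) (I : Set (Fin n_c)),
      ‖zstar x₁ I - zstar x₂ I‖ ≤ κ * ‖x₁ - x₂‖)
    (Vl : Set (WithLp 2 (EuclideanSpace ℝ (Fin n_x) × EuclideanSpace ℝ (Fin n_z))))
    (hVl : Vl = {v | ∀ j, dotProduct (G j) ((WithLp.equiv 2 _) v).2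
      ≤ dotProduct (S j) ((WithLp.equiv 2 _) v).1 + w j})
    (N : WithLp 2 (EuclideanSpace ℝ (Fin n_x) × EuclideanSpace ℝ (Fin n_z)) → ℝ → ℕ)
    (hN : ∀ v r, N v r = Set.ncard {j : Fin n_c | Metric.closedBall v r ⊆
      {u | dotProduct (G j) ((WithLp.equiv 2 _) u).2
        - dotProduct (S j) ((WithLp.equiv 2 _) u).1 ≤ w j}})
    (Γ : ℕ → Set ℝ)
    (hΓ : ∀ i, Γ i = {r : ℝ | 0 ≤ r ∧ ∀ v ∈ Vl, n_c - i ≤ N v r})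
    (hVlne : Vl.Nonempty)
    (x : ℕ → EuclideanSpace ℝ (Fin n_x)) (hx0 : x 0 ≠ 0)
    (c : ℝ) (hc : 0 < c) (β : ℝ) (hβ0 : 0 < β) (hβ1 : β < 1)
    (hdecay : ∀ k : ℕ, ‖x k‖ ≤ c * ‖x 0‖ * β ^ k)
    (i : ℕ) (hi : 1 ≤ i) (hin : i ≤ n_c)
    (σ : ℝ) (hσpos : 0 < σ)
    (hσ : ENNReal.ofReal σ = sSup (ENNReal.ofReal '' Γ i))
    (Ki : ℤ)
    (hKi : Ki = ⌈Real.log (σ / (c * ‖x 0‖ * (1 + β⁻¹) * Real.sqrt (1 + κ ^ 2)))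
      / Real.log β⌉) :
    ∀ k : ℕ, Ki ≤ (k : ℤ) → 1 ≤ k →
      Set.ncard
        ({j | dotProduct (G j) (zstar (x (k - 1)) Set.univ)
            = dotProduct (S j) (x (k - 1)) + w j} ∪
          {j | Metric.closedBall (zstar (x (k - 1)) Set.univ) (κ * ‖x k - x (k - 1)‖) ⊆
            {z : EuclideanSpace ℝ (Fin n_z) |
              dotProduct (G j) z ≤ dotProduct (S j) (x k) + w j}}ᶜ)
        ≤ n_z + i := by
  intro k hKik hk1
  set k' := k - 1 with hk'def
  have hkk : k = k' + 1 := (Nat.succ_pred_eq_of_pos hk1).symm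
  set z0 := zstar (x k') Set.univ with hz0
  set A : Set (Fin n_c) := {j | dotProduct (G j) z0
      = dotProduct (S j) (x k') + w j} with hA
  set D : Set (Fin n_c) := {j | Metric.closedBall z0 (κ * ‖x k - x k'‖) ⊆
      {z : EuclideanSpace ℝ (Fin n_z) |
        dotProduct (G j) z ≤ dotProduct (S j) (x k) + w j}} with hD
  -- Step 1: |A| ≤ n_z by LICQ
  have hAcard : A.ncard ≤ n_z := by
    have h1 := (hLICQ (x k')).fintype_card_le_finrank
    rw [Module.finrank_fintype_fun_eq_card, Fintype.card_fin] at h1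
    calc A.ncard = Nat.card A := (Nat.card_coe_set_eq _).symm
      _ = Fintype.card A := Nat.card_eq_fintype_card
      _ ≤ n_z := h1
  -- constants
  set Δ := ‖x k - x k'‖ with hΔ
  have hΔ0 : 0 ≤ Δ := norm_nonneg _
  have hx0pos : 0 < ‖x 0‖ := norm_pos_iff.mpr hx0
  have hsq : 0 < Real.sqrt (1 + κ ^ 2) := Real.sqrt_pos.mpr (by positivity)
  set C := c * ‖x 0‖ * (1 + β⁻¹) * Real.sqrt (1 + κ ^ 2) with hC
  have hCpos : 0 < C := by
    have : 0 < 1 + β⁻¹ := by positivity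
    positivity
  have hlogβ : Real.log β < 0 := Real.log_neg hβ0 hβ1
  -- Step 2: β ^ k * C ≤ σ
  have hβk : β ^ k ≤ σ / C := by
    have hL : Real.log (σ / C) / Real.log β ≤ (k : ℝ) := by
      have := Int.ceil_le.mp (hKi ▸ hKik)
      exact_mod_cast this
    have h2 : (k : ℝ) * Real.log β ≤ Real.log (σ / C) := by
      have := mul_le_mul_of_nonpos_right hL hlogβ.le
      rwa [div_mul_cancel₀ _ hlogβ.ne] at this
    have hσC : 0 < σ / C := div_pos hσpos hCpos
    have h3 : Real.log (β ^ k) ≤ Real.log (σ / C) := by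
      rwa [Real.log_pow]
    calc β ^ k = Real.exp (Real.log (β ^ k)) := (Real.exp_log (pow_pos hβ0 k)).symm
      _ ≤ Real.exp (Real.log (σ / C)) := Real.exp_le_exp.mpr h3
      _ = σ / C := Real.exp_log hσC
  -- Step 3: the key radius bound
  have hrad : Real.sqrt (1 + κ ^ 2) * Δ ≤ σ := by
    have hΔle : Δ ≤ c * ‖x 0‖ * β ^ k * (1 + β⁻¹) := by
      have h1 : Δ ≤ ‖x k‖ + ‖x k'‖ := norm_sub_le _ _
      have h2 := hdecay k
      have h3 := hdecay k'
      have h4 : β ^ k' = β ^ k * β⁻¹ := by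
        rw [hkk, pow_succ, mul_assoc, mul_inv_cancel₀ hβ0.ne', mul_one]
      rw [h4] at h3
      nlinarith [pow_pos hβ0 k, mul_pos hc hx0pos]
    have h5 : Real.sqrt (1 + κ ^ 2) * Δ ≤ C * β ^ k := by
      rw [hC]; nlinarith
    have h6 : C * β ^ k ≤ σ := by
      have := mul_le_mul_of_nonneg_left hβk hCpos.le
      rwa [mul_div_cancel₀ _ hCpos.ne'] at this
    linarith
  -- the lifted point
  set v : WithLp 2 (EuclideanSpace ℝ (Fin n_x) × EuclideanSpace ℝ (Fin n_z)) :=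
    (WithLp.equiv 2 _).symm (x k', z0) with hv
  have hvVl : v ∈ Vl := by
    rw [hVl]
    intro j
    have := hmem (x k') Set.univ
    rw [hZ] at this
    simpa [hv, Equiv.apply_symm_apply] using this j (Set.mem_univ j)
  -- the half spaces and their closedness
  set Hs : Fin n_c → Set (WithLp 2 (EuclideanSpace ℝ (Fin n_x) × EuclideanSpace ℝ (Fin n_z))) :=
    fun j => {u | dotProduct (G j) ((WithLp.equiv 2 _) u).2
      - dotProduct (S j) ((WithLp.equiv 2 _) u).1 ≤ w j} with hHs
  have hHsclosed : ∀ j, IsClosed (Hs j) := by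
    intro j
    have hce : Continuous (WithLp.equiv 2
        (EuclideanSpace ℝ (Fin n_x) × EuclideanSpace ℝ (Fin n_z))) :=
      WithLp.prod_continuous_ofLp _ _ _
    have hc2 : Continuous fun u : WithLp 2 (EuclideanSpace ℝ (Fin n_x) ×
        EuclideanSpace ℝ (Fin n_z)) =>
        dotProduct (G j) ((WithLp.equiv 2 _) u).2 := by
      simp only [dotProduct]
      refine continuous_finset_sum _ fun l _ => Continuous.mul continuous_const ?_
      exact (EuclideanSpace.proj l).continuous.comp (continuous_snd.comp hce)
    have hc1 : Continuous fun u : WithLp 2 (EuclideanSpace ℝ (Fin n_x) ×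
        EuclideanSpace ℝ (Fin n_z)) =>
        dotProduct (S j) ((WithLp.equiv 2 _) u).1 := by
      simp only [dotProduct]
      refine continuous_finset_sum _ fun l _ => Continuous.mul continuous_const ?_
      exact (EuclideanSpace.proj l).continuous.comp (continuous_fst.comp hce)
    exact isClosed_le (hc2.sub hc1) continuous_const
  -- membership in Γ i for r < σ
  have hΓmem : ∀ r : ℝ, 0 ≤ r → r < σ →
      (n_c - i : ℕ) ≤ {j : Fin n_c | Metric.closedBall v r ⊆ Hs j}.ncard := by
    intro r hr0 hrσ
    have h1 : ENNReal.ofReal r < sSup (ENNReal.ofReal '' Γ i) := by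
      rw [← hσ]; exact (ENNReal.ofReal_lt_ofReal_iff hσpos).mpr hrσ
    obtain ⟨e, he, hlt⟩ := lt_sSup_iff.mp h1
    obtain ⟨t, htΓ, rfl⟩ := he
    have hrt : r < t := (ENNReal.ofReal_lt_ofReal_iff_of_nonneg hr0).mp hlt
    rw [hΓ] at htΓ
    have h2 : (n_c - i : ℕ) ≤ N v t := htΓ.2 v hvVl
    rw [hN] at h2
    refine h2.trans (Set.ncard_le_ncard ?_ (Set.toFinite _))
    intro j hj
    exact (Metric.closedBall_subset_closedBall hrt.le).trans hj
  -- the intersection of shrinking balls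
  set T : ℕ → Set (Fin n_c) := fun n =>
    {j : Fin n_c | Metric.closedBall v (σ - σ / (n + 1)) ⊆ Hs j} with hT
  have hTcard : (n_c - i : ℕ) ≤ (⋂ n, T n).ncard := by
    refine ncard_iInter_ge_aux T ?_ _ fun n => ?_
    · intro m n hmn j hj
      refine (Metric.closedBall_subset_closedBall ?_).trans hj
      have : σ / (n + 1) ≤ σ / (m + 1) := by
        apply div_le_div_of_nonneg_left hσpos.le (by positivity)
        push_cast; linarith [(Nat.cast_le (α := ℝ)).mpr hmn]
      linarith
    · refine hΓmem _ ?_ ?_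
      · have : σ / (n + 1) ≤ σ / 1 := by
          apply div_le_div_of_nonneg_left hσpos.le one_pos
          push_cast; linarith [Nat.cast_nonneg (α := ℝ) n]
        simp at this; linarith
      · have : 0 < σ / (n + 1) := by positivity
        linarith
  -- big ball is inside each Hs j for j in the intersection
  have hbig : ∀ j ∈ ⋂ n, T n, Metric.closedBall v σ ⊆ Hs j := by
    intro j hj
    have hball : Metric.ball v σ ⊆ Hs j := by
      intro u hu
      rw [Metric.mem_ball] at hu
      obtain ⟨n, hn⟩ := exists_nat_one_div_lt (ε := (σ - dist u v) / σ)
        (div_pos (by linarith) hσpos)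
      have hjn := Set.mem_iInter.mp hj n
      apply hjn
      rw [Metric.mem_closedBall]
      have h7 : σ / (n + 1) = σ * (1 / (n + 1)) := by ring
      have h8 : σ * (1 / ((n : ℝ) + 1)) < σ * ((σ - dist u v) / σ) :=
        mul_lt_mul_of_pos_left hn hσpos
      rw [mul_div_cancel₀ _ hσpos.ne'] at h8
      rw [h7] at *
      linarith
    have h9 : Metric.closedBall v σ = closure (Metric.ball v σ) :=
      (closure_ball v hσpos.ne').symm
    rw [h9]
    exact (hHsclosed j).closure_subset_iff.mpr hball
  -- intersection is inside D
  have hsubD : (⋂ n, T n) ⊆ D := by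
    intro j hj
    intro z hz
    rw [Metric.mem_closedBall] at hz
    set u : WithLp 2 (EuclideanSpace ℝ (Fin n_x) × EuclideanSpace ℝ (Fin n_z)) :=
      (WithLp.equiv 2 _).symm (x k, z) with hu
    have hdist : dist u v ≤ σ := by
      rw [WithLp.prod_dist_eq_of_L2]
      have e1 : u.fst = x k := rfl
      have e2 : u.snd = z := rfl
      have e3 : v.fst = x k' := rfl
      have e4 : v.snd = z0 := rfl
      rw [e1, e2, e3, e4]
      have hd1 : dist (x k) (x k') = Δ := by rw [dist_eq_norm]
      have hd2 : dist z z0 ≤ κ * Δ := hz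
      have hd2' : 0 ≤ dist z z0 := dist_nonneg
      have h10 : dist (x k) (x k') ^ 2 + dist z z0 ^ 2 ≤ (1 + κ ^ 2) * Δ ^ 2 := by
        rw [hd1]; nlinarith
      calc Real.sqrt (dist (x k) (x k') ^ 2 + dist z z0 ^ 2)
          ≤ Real.sqrt ((1 + κ ^ 2) * Δ ^ 2) := Real.sqrt_le_sqrt h10
        _ = Real.sqrt (1 + κ ^ 2) * Δ := by
            rw [Real.sqrt_mul (by positivity), Real.sqrt_sq hΔ0]
        _ ≤ σ := hrad
    have := hbig j hj (Metric.mem_closedBall.mpr hdist)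
    rw [hHs] at this
    simp only [hu, Equiv.apply_symm_apply, Set.mem_setOf_eq] at this
    simp only [Set.mem_setOf_eq]
    linarith
  -- conclude
  have hDcard : (n_c - i : ℕ) ≤ D.ncard :=
    hTcard.trans (Set.ncard_le_ncard hsubD (Set.toFinite _))
  have hcompl : D.ncard + Dᶜ.ncard = n_c := by
    rw [Set.ncard_add_ncard_compl, Nat.card_eq_fintype_card, Fintype.card_fin]
  have hDc : Dᶜ.ncard ≤ i := by omega
  calc (A ∪ Dᶜ).ncard ≤ A.ncard + Dᶜ.ncard := Set.ncard_union_le _ _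
    _ ≤ n_z + i := add_le_add hAcard hDc
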